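/- In the Milnor-Witt K-theory ring K^MW_*(E), for every unit a ∈ E^×, one has [a]·[a] = [a]·[−1]. -/

import Mathlib

/-!  Milnor-Witt K-theory of a field `E`, presented by generators `[a]` (degree 1, `a ∈ Eˣ`)
and `η` (degree −1), with relations
`[a][1−a] = 0` (for `a ≠ 1`), `[ab] = [a] + [b] + η[a][b]`, `η[a] = [a]η`, `η(η[−1]+2) = 0`. -/

/-- Generators of Milnor-Witt K-theory: symbols `[a]` for units `a`, and `η`. -/
inductive MWGen (E : Type) [Field E] : Type
  | sym : Eˣ → MWGen E
  | eta : MWGen E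

namespace MWK

variable (E : Type) [Field E]

/-- The element `[a]` in the free algebra. -/
noncomputable def S (a : Eˣ) : FreeAlgebra ℤ (MWGen E) := FreeAlgebra.ι ℤ (MWGen.sym a)

/-- The element `η` in the free algebra. -/
noncomputable def H : FreeAlgebra ℤ (MWGen E) := FreeAlgebra.ι ℤ MWGen.eta

/-- The defining relations of Milnor-Witt K-theory. -/
inductive Rel : FreeAlgebra ℤ (MWGen E) → FreeAlgebra ℤ (MWGen E) → Prop
  | steinberg (a : Eˣ) (ha : (a : E) ≠ 1) :
      Rel (S E a * S E (Units.mk0 (1 - (a : E)) (sub_ne_zero_of_ne (Ne.symm ha)))) 0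
  | mul_symbol (a b : Eˣ) : Rel (S E (a * b)) (S E a + S E b + H E * S E a * S E b)
  | eta_comm (a : Eˣ) : Rel (H E * S E a) (S E a * H E)
  | eta_hyp : Rel (H E * (H E * S E (-1) + 2)) 0

end MWK

/-- The Milnor-Witt K-theory ring `K^MW_*(E)` of a field `E`. -/
noncomputable def KMW (E : Type) [Field E] : Type := RingQuot (MWK.Rel E)

noncomputable instance (E : Type) [Field E] : Ring (KMW E) :=
  inferInstanceAs (Ring (RingQuot (MWK.Rel E)))

namespace KMW

variable {E : Type} [Field E]

/-- The symbol `[a] ∈ K^MW_1(E)`. -/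
noncomputable def sym (a : Eˣ) : KMW E := RingQuot.mkRingHom (MWK.Rel E) (MWK.S E a)

/-- The symbol `η ∈ K^MW_{-1}(E)`. -/
noncomputable def eta : KMW E := RingQuot.mkRingHom (MWK.Rel E) (MWK.H E)

/-- The quadratic form `⟨a⟩ = 1 + η[a] ∈ K^MW_0(E)`. -/
noncomputable def form (a : Eˣ) : KMW E := 1 + eta * sym a

/-- `ε = −⟨−1⟩`. -/
noncomputable def eps : KMW E := - form (-1)

end KMW

namespace KMW

variable {E : Type} [Field E]

lemma mul_symbol (a b : Eˣ) :
    sym (E := E) (a * b) = sym a + sym b + eta * sym a * sym b := by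
  have h := RingQuot.mkRingHom_rel (MWK.Rel.mul_symbol (E := E) a b)
  simp only [map_mul, map_add] at h
  exact h

lemma eta_comm' (a : Eˣ) : eta * sym (E := E) a = sym a * eta := by
  have h := RingQuot.mkRingHom_rel (MWK.Rel.eta_comm (E := E) a)
  simp only [map_mul] at h
  exact h

lemma steinberg' (a u : Eˣ) (ha : (a : E) ≠ 1) (hu : (u : E) = 1 - (a : E)) :
    sym (E := E) a * sym u = 0 := by
  have h := RingQuot.mkRingHom_rel (MWK.Rel.steinberg (E := E) a ha)
  have hu' : u = Units.mk0 (1 - (a : E)) (sub_ne_zero_of_ne (Ne.symm ha)) :=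
    Units.ext (by simp [hu])
  rw [hu']
  simp only [map_mul, map_zero] at h
  exact h

lemma eta_hyp' : eta * (eta * sym (E := E) (-1) + 2) = 0 := by
  have h := RingQuot.mkRingHom_rel (MWK.Rel.eta_hyp (E := E))
  simp only [map_mul, map_add, map_ofNat, map_zero] at h
  exact h

lemma symA (a : Eˣ) : sym (E := E) 1 + eta * sym a * sym 1 = 0 := by
  have h := mul_symbol (E := E) a 1
  rw [mul_one] at h
  nth_rewrite 1 [← add_zero (sym a)] at h
  rw [add_assoc] at h
  exact (add_left_cancel h).symm

lemma eta_sym_one : eta * sym (E := E) 1 = 0 := by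
  have hA := symA (E := E) (-1)
  have h1 : eta * sym (E := E) (-1) * sym 1 = -sym 1 := by
    rw [eq_neg_iff_add_eq_zero, add_comm]; exact hA
  have h2 : eta * (eta * sym (E := E) (-1) + 2) * sym 1 = 0 := by
    rw [eta_hyp', zero_mul]
  have h3 : eta * (eta * sym (E := E) (-1) + 2) * sym 1 =
      eta * (eta * sym (-1) * sym 1) + 2 * (eta * sym 1) := by noncomm_ring
  rw [h3, h1] at h2
  have h4 : eta * sym (E := E) 1 = 2 * (eta * sym 1) := by
    rw [eq_comm, ← sub_eq_zero]
    calc 2 * (eta * sym (E := E) 1) - eta * sym 1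
        = eta * -sym 1 + 2 * (eta * sym 1) := by noncomm_ring
      _ = 0 := h2
  have h5 : (2 : KMW E) * (eta * sym 1) - eta * sym 1 = eta * sym 1 := by noncomm_ring
  rw [← h4] at h5
  rw [← h5, sub_self]

lemma sym_one : sym (E := E) 1 = 0 := by
  have hA := symA (E := E) 1
  rw [mul_assoc, ← mul_assoc, eta_sym_one, zero_mul, add_zero] at hA
  exact hA

lemma inv_rel (a : Eˣ) :
    sym (E := E) a + sym a⁻¹ + eta * sym a * sym a⁻¹ = 0 := by
  have h := mul_symbol (E := E) a a⁻¹
  rw [mul_inv_cancel, sym_one] at h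
  exact h.symm

lemma left_inv_zero {x y : Eˣ} (h : sym (E := E) x * sym y = 0) :
    sym (E := E) x⁻¹ * sym y = 0 := by
  have h1 := inv_rel (E := E) x⁻¹
  rw [inv_inv] at h1
  have h2 : sym (E := E) x⁻¹ = -(eta * sym x⁻¹ * sym x) - sym x :=
    eq_sub_of_add_eq (eq_neg_of_add_eq_zero_left h1)
  calc sym (E := E) x⁻¹ * sym y
      = (-(eta * sym x⁻¹ * sym x) - sym x) * sym y := by rw [← h2]
    _ = -(sym x * sym y) - eta * sym x⁻¹ * (sym x * sym y) := by noncomm_ring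
    _ = 0 := by rw [h]; simp

lemma right_inv_zero {x y : Eˣ} (h : sym (E := E) x * sym y = 0) :
    sym (E := E) x * sym y⁻¹ = 0 := by
  have h1 := inv_rel (E := E) y
  rw [add_comm (sym y) (sym y⁻¹)] at h1
  have h2 : sym (E := E) y⁻¹ = -(eta * sym y * sym y⁻¹) - sym y :=
    eq_sub_of_add_eq (eq_neg_of_add_eq_zero_left h1)
  calc sym (E := E) x * sym y⁻¹
      = sym x * (-(eta * sym y * sym y⁻¹) - sym y) := by rw [← h2]
    _ = -(sym x * sym y) - sym x * eta * (sym y * sym y⁻¹) := by noncomm_ring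
    _ = -(sym x * sym y) - eta * (sym x * sym y) * sym y⁻¹ := by
        rw [← eta_comm']; noncomm_ring
    _ = 0 := by rw [h]; simp

lemma sym_mul_neg (a : Eˣ) : sym (E := E) a * sym (-a) = 0 := by
  by_cases ha : (a : E) = 1
  · have : a = 1 := Units.ext (by simp [ha])
    rw [this, sym_one, zero_mul]
  · have ha0 : (a : E) ≠ 0 := a.ne_zero
    have h1 : (1 : E) - (a : E) ≠ 0 := sub_ne_zero_of_ne (Ne.symm ha)
    have ha' : ((a⁻¹ : Eˣ) : E) ≠ 1 := by
      simp only [Units.val_inv_eq_inv_val, ne_eq, inv_eq_one]; exact ha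
    have h2 : (1 : E) - ((a⁻¹ : Eˣ) : E) ≠ 0 := sub_ne_zero_of_ne (Ne.symm ha')
    set u : Eˣ := Units.mk0 _ h1 with hu
    set v : Eˣ := Units.mk0 _ h2 with hv
    have hS1 : sym (E := E) a * sym u = 0 := steinberg' a u ha rfl
    have hS2 : sym (E := E) a⁻¹ * sym v = 0 := steinberg' a⁻¹ v ha' rfl
    have h3 : sym (E := E) a * sym v = 0 := by
      have := left_inv_zero hS2; rwa [inv_inv] at this
    have h4 : sym (E := E) a * sym v⁻¹ = 0 := right_inv_zero h3
    have h2' : (1 : E) - ((a : E))⁻¹ ≠ 0 := by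
      simpa [Units.val_inv_eq_inv_val] using h2
    have hneg : -a = u * v⁻¹ := by
      apply Units.ext
      simp only [Units.val_neg, Units.val_mul, Units.val_inv_eq_inv_val, hu, hv,
        Units.val_mk0]
      rw [← div_eq_mul_inv, eq_comm, div_eq_iff h2']
      field_simp
      ring
    rw [hneg, mul_symbol]
    calc sym (E := E) a * (sym u + sym v⁻¹ + eta * sym u * sym v⁻¹)
        = sym a * sym u + sym a * sym v⁻¹ +
            sym a * eta * (sym u * sym v⁻¹) := by noncomm_ring
      _ = sym a * sym u + sym a * sym v⁻¹ +
            eta * (sym a * sym u) * sym v⁻¹ := by rw [← eta_comm']; noncomm_ring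
      _ = 0 := by rw [hS1, h4]; simp

end KMW

/-- In `K^MW_*(E)`, for every unit `a`, `[a]·[a] = [a]·[−1]`. -/
theorem kmw_symbol_sq (E : Type) [Field E] (a : Eˣ) :
    KMW.sym a * KMW.sym a = KMW.sym a * KMW.sym (-1) := by
  have h : KMW.sym (E := E) a =
      KMW.sym (-a) + KMW.sym (-1) + KMW.eta * KMW.sym (-a) * KMW.sym (-1) := by
    have := KMW.mul_symbol (E := E) (-a) (-1)
    rwa [show (-a : Eˣ) * (-1) = a by simp] at this
  calc KMW.sym a * KMW.sym a
      = KMW.sym a * (KMW.sym (-a) + KMW.sym (-1) +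
          KMW.eta * KMW.sym (-a) * KMW.sym (-1)) := by nth_rewrite 2 [h]; rfl
    _ = KMW.sym a * KMW.sym (-a) + KMW.sym a * KMW.sym (-1) +
          KMW.sym a * KMW.eta * (KMW.sym (-a) * KMW.sym (-1)) := by noncomm_ring
    _ = KMW.sym a * KMW.sym (-a) + KMW.sym a * KMW.sym (-1) +
          KMW.eta * (KMW.sym a * KMW.sym (-a)) * KMW.sym (-1) := by
        rw [← KMW.eta_comm']; noncomm_ring
    _ = KMW.sym a * KMW.sym (-1) := by rw [KMW.sym_mul_neg]; simp
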